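/- arXiv:2305.12551 — 3 statements merged into one kernel-verified Lean document; each statement's English description precedes it below -/
import Mathlib

section
/- Closed form of the Stein kernel on SO(N): with kernel k(X,Y) = exp(τ tr(XᵀY)) on SO(N) and the orthonormal left-invariant basis {X E_{ij}}_{i<j}, the function k_p satisfies k_p(X,Y) = tr[𝒜(Xᵀ(∇_X log p + τY))ᵀ 𝒜(Yᵀ(∇_Y log p + τX))] · e^{τ tr(XᵀY)} + (τ/2)(N−1) tr(XᵀY) e^{τ tr(XᵀY)} for any locally Lipschitz density p on SO(N). -/
open Matrix
open scoped Kronecker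

noncomputable section

/-- The orthonormal basis element `E_{ij}` (for `i < j`) of the Lie algebra `so(N)`:
`√2/2` at entry `(i,j)`, `−√2/2` at `(j,i)`, zeros elsewhere. -/
def Eb (N : ℕ) (i j : Fin N) : Matrix (Fin N) (Fin N) ℝ :=
  (Real.sqrt 2 / 2) • (Matrix.single i j (1 : ℝ) - Matrix.single j i (1 : ℝ))

/-- Derivative of `h` at `X` along the left-invariant vector field `X ↦ X·B` on `SO(N)`:
`d/dt h(X exp(tB)) |_{t=0}`. -/
def dirDeriv {N : ℕ} (h : Matrix (Fin N) (Fin N) ℝ → ℝ)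
    (B X : Matrix (Fin N) (Fin N) ℝ) : ℝ :=
  deriv (fun t : ℝ => h (X * NormedSpace.exp (t • B))) 0

/-- Skew-symmetrization `𝒜(A) = (A − Aᵀ)/2`. -/
def skewPart {N : ℕ} (A : Matrix (Fin N) (Fin N) ℝ) : Matrix (Fin N) (Fin N) ℝ :=
  (2⁻¹ : ℝ) • (A - Aᵀ)

/-- The kernel `k(X,Y) = exp(τ tr(XᵀY))` on `SO(N)`. -/
def kSON {N : ℕ} (τ : ℝ) (X Y : Matrix (Fin N) (Fin N) ℝ) : ℝ :=
  Real.exp (τ * (Xᵀ * Y).trace)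

/-- The Stein operator component `A_p^{ij} h = D^{ij} h + h · D^{ij} log p`, where
`D^{ij}` is the derivation along the left-invariant field `X ↦ X E_{ij}`
(the modular term vanishes: `SO(N)` is compact, hence unimodular). -/
def steinSON {N : ℕ} (p : Matrix (Fin N) (Fin N) ℝ → ℝ) (i j : Fin N)
    (h : Matrix (Fin N) (Fin N) ℝ → ℝ) (X : Matrix (Fin N) (Fin N) ℝ) : ℝ :=
  dirDeriv h (Eb N i j) X + h X * dirDeriv (fun Z => Real.log (p Z)) (Eb N i j) X

/-- The Stein kernel `k_p(X,Y) = Σ_{i<j} Ã_p^{ij} A_p^{ij} k(X,Y)`, `A_p^{ij}` acting on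
the first argument of `k` and `Ã_p^{ij}` on the second. -/
def kpSON {N : ℕ} (τ : ℝ) (p : Matrix (Fin N) (Fin N) ℝ → ℝ)
    (X Y : Matrix (Fin N) (Fin N) ℝ) : ℝ :=
  ∑ i : Fin N, ∑ j : Fin N, if i < j then
    steinSON p i j (fun Y' => steinSON p i j (fun X' => kSON τ X' Y') X) Y
  else 0

/-- The `p`-independent term `c(X,Y) = (τ/2)(N−1) tr(XᵀY) e^{τ tr(XᵀY)}`. -/
def cSON {N : ℕ} (τ : ℝ) (X Y : Matrix (Fin N) (Fin N) ℝ) : ℝ :=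
  (τ / 2) * ((N : ℝ) - 1) * (Xᵀ * Y).trace * Real.exp (τ * (Xᵀ * Y).trace)

attribute [local instance] Matrix.linftyOpNormedRing Matrix.linftyOpNormedAlgebra

variable {N : ℕ}

/-- linear functional M ↦ (Mᵀ * C).trace as a continuous linear map. -/
def trFun (C : Matrix (Fin N) (Fin N) ℝ) : Matrix (Fin N) (Fin N) ℝ →ₗ[ℝ] ℝ where
  toFun M := (Mᵀ * C).trace
  map_add' A B := by simp [Matrix.transpose_add, Matrix.add_mul]
  map_smul' r A := by simp [Matrix.transpose_smul, Matrix.smul_mul]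

lemma hasDerivAt_curve (C X B : Matrix (Fin N) (Fin N) ℝ) :
    HasDerivAt (fun t : ℝ => ((X * NormedSpace.exp (t • B))ᵀ * C).trace)
      (((X * B)ᵀ * C).trace) 0 := by
  have h1 : HasDerivAt (fun t : ℝ => NormedSpace.exp (t • B)) B 0 := by
    have := hasDerivAt_exp_smul_const (𝕂 := ℝ) B 0
    simp at this
    exact this
  have h2 : HasDerivAt (fun t : ℝ => X * NormedSpace.exp (t • B)) (X * B) 0 :=
    h1.const_mul X
  have := ((trFun C).toContinuousLinearMap.hasFDerivAt (x := X * NormedSpace.exp ((0:ℝ) • B))).comp_hasDerivAt 0 h2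
  exact this

def trFun2 (C : Matrix (Fin N) (Fin N) ℝ) : Matrix (Fin N) (Fin N) ℝ →ₗ[ℝ] ℝ where
  toFun M := (Cᵀ * M).trace
  map_add' A B := by simp [Matrix.mul_add]
  map_smul' r A := by simp [Matrix.mul_smul]

lemma hasDerivAt_curve2 (C Y B : Matrix (Fin N) (Fin N) ℝ) :
    HasDerivAt (fun t : ℝ => (Cᵀ * (Y * NormedSpace.exp (t • B))).trace)
      ((Cᵀ * (Y * B)).trace) 0 := by
  have h1 : HasDerivAt (fun t : ℝ => NormedSpace.exp (t • B)) B 0 := by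
    have := hasDerivAt_exp_smul_const (𝕂 := ℝ) B 0
    simp at this
    exact this
  have h2 : HasDerivAt (fun t : ℝ => Y * NormedSpace.exp (t • B)) (Y * B) 0 :=
    h1.const_mul Y
  have := ((trFun2 C).toContinuousLinearMap.hasFDerivAt
    (x := Y * NormedSpace.exp ((0:ℝ) • B))).comp_hasDerivAt 0 h2
  exact this

lemma inner_stein (τ : ℝ) (p : Matrix (Fin N) (Fin N) ℝ → ℝ)
    (i j : Fin N) (X Y' : Matrix (Fin N) (Fin N) ℝ) :
    steinSON p i j (fun X' => kSON τ X' Y') X =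
      (τ * ((X * Eb N i j)ᵀ * Y').trace + dirDeriv (fun Z => Real.log (p Z)) (Eb N i j) X)
        * Real.exp (τ * (Xᵀ * Y').trace) := by
  have hd : HasDerivAt (fun t : ℝ => kSON τ (X * NormedSpace.exp (t • Eb N i j)) Y')
      (Real.exp (τ * (Xᵀ * Y').trace) * (τ * ((X * Eb N i j)ᵀ * Y').trace)) 0 := by
    have := ((hasDerivAt_curve Y' X (Eb N i j)).const_mul τ).exp
    simpa [kSON] using this
  unfold steinSON dirDeriv
  rw [hd.deriv]
  simp [kSON]
  ring

lemma outer_stein (τ : ℝ) (p : Matrix (Fin N) (Fin N) ℝ → ℝ)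
    (i j : Fin N) (X Y : Matrix (Fin N) (Fin N) ℝ) :
    steinSON p i j (fun Y' => steinSON p i j (fun X' => kSON τ X' Y') X) Y =
      Real.exp (τ * (Xᵀ * Y).trace) *
        (τ * ((X * Eb N i j)ᵀ * (Y * Eb N i j)).trace +
          (τ * ((X * Eb N i j)ᵀ * Y).trace + dirDeriv (fun Z => Real.log (p Z)) (Eb N i j) X) *
          (τ * (Xᵀ * (Y * Eb N i j)).trace + dirDeriv (fun Z => Real.log (p Z)) (Eb N i j) Y)) := by
  set E := Eb N i j
  set cX := dirDeriv (fun Z => Real.log (p Z)) E X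
  set cY := dirDeriv (fun Z => Real.log (p Z)) E Y
  have hfun : (fun Y' => steinSON p i j (fun X' => kSON τ X' Y') X) =
      fun Y' => (τ * ((X * E)ᵀ * Y').trace + cX) * Real.exp (τ * (Xᵀ * Y').trace) := by
    funext Y'; exact inner_stein τ p i j X Y'
  rw [hfun]
  have h1 : HasDerivAt (fun t : ℝ => τ * ((X * E)ᵀ * (Y * NormedSpace.exp (t • E))).trace + cX)
      (τ * ((X * E)ᵀ * (Y * E)).trace) 0 :=
    ((hasDerivAt_curve2 (X * E) Y E).const_mul τ).add_const cX
  have h2 : HasDerivAt (fun t : ℝ => Real.exp (τ * (Xᵀ * (Y * NormedSpace.exp (t • E))).trace))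
      (Real.exp (τ * (Xᵀ * Y).trace) * (τ * (Xᵀ * (Y * E)).trace)) 0 := by
    have := ((hasDerivAt_curve2 X Y E).const_mul τ).exp
    simpa using this
  have hd := (h1.mul h2).deriv
  unfold steinSON dirDeriv
  rw [show deriv (fun t : ℝ => (fun Y' => (τ * ((X * E)ᵀ * Y').trace + cX) * Real.exp (τ * (Xᵀ * Y').trace)) (Y * NormedSpace.exp (t • Eb N i j))) 0 = _ from hd]
  have hcY : deriv (fun t : ℝ => Real.log (p (Y * NormedSpace.exp (t • Eb N i j)))) 0 = cY := rfl
  simp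
  rw [hcY]
  ring


lemma trace_mul_single (M : Matrix (Fin N) (Fin N) ℝ) (a b : Fin N) :
    (M * Matrix.single a b (1:ℝ)).trace = M b a := by
  simp [Matrix.trace, Matrix.diag, Matrix.mul_apply, Matrix.single, Matrix.of_apply,
    mul_ite, Finset.sum_ite_eq, Finset.sum_ite_eq', ite_and]

lemma trace_single_mul (M : Matrix (Fin N) (Fin N) ℝ) (a b : Fin N) :
    (Matrix.single a b (1:ℝ) * M).trace = M b a := by
  simp [Matrix.trace, Matrix.diag, Matrix.mul_apply, Matrix.single, Matrix.of_apply,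
    ite_mul, Finset.sum_ite_eq, Finset.sum_ite_eq', ite_and]

lemma trace_single_mul_mul_single (M : Matrix (Fin N) (Fin N) ℝ) (a b c d : Fin N) :
    (Matrix.single a b (1:ℝ) * M * Matrix.single c d (1:ℝ)).trace =
      if a = d then M b c else 0 := by
  simp [Matrix.trace, Matrix.diag, Matrix.mul_apply, Matrix.single, Matrix.of_apply,
    mul_ite, ite_mul, Finset.sum_ite_eq, Finset.sum_ite_eq', ite_and]

lemma sum_lt_eq_half (f : Fin N → Fin N → ℝ) (hsymm : ∀ i j, f i j = f j i) :
    ∑ i, ∑ j, (if i < j then f i j else 0) =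
      ((∑ i, ∑ j, f i j) - ∑ i, f i i) / 2 := by
  have tri : ∀ i j : Fin N, f i j =
      (if i < j then f i j else 0) + (if j < i then f i j else 0) +
        (if i = j then f i j else 0) := by
    intro i j
    rcases lt_trichotomy i j with h | h | h
    · simp [h, h.ne, h.asymm]
    · simp [h]
    · simp [h, h.ne', h.asymm]
  have key : ∑ i, ∑ j, f i j =
      (∑ i, ∑ j, (if i < j then f i j else 0)) +
      (∑ i, ∑ j, (if j < i then f i j else 0)) + ∑ i, f i i := by
    rw [← Finset.sum_add_distrib]
    rw [Finset.sum_congr rfl fun i _ => Finset.sum_congr rfl fun j _ => tri i j]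
    simp [Finset.sum_add_distrib, Finset.sum_ite_eq]
  have swap : ∑ i, ∑ j, (if j < i then f i j else 0) =
      ∑ i, ∑ j, (if i < j then f i j else 0) := by
    rw [Finset.sum_comm]
    exact Finset.sum_congr rfl fun i _ => Finset.sum_congr rfl fun j _ => by
      by_cases h : i < j <;> simp [h, hsymm]
  rw [swap] at key
  linarith

lemma transpose_single (a b : Fin N) :
    (Matrix.single a b (1:ℝ))ᵀ = Matrix.single b a (1:ℝ) := by
  ext i' j'
  simp [Matrix.single, Matrix.transpose_apply, and_comm]

lemma sqhalf : (Real.sqrt 2 / 2) * (Real.sqrt 2 / 2) = 1/2 := by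
  rw [div_mul_div_comm, Real.mul_self_sqrt (by norm_num : (2:ℝ) ≥ 0)]
  norm_num

lemma trace_mul_Eb (M : Matrix (Fin N) (Fin N) ℝ) (i j : Fin N) :
    (M * Eb N i j).trace = (Real.sqrt 2 / 2) * (M j i - M i j) := by
  simp [Eb, Matrix.mul_sub, Matrix.mul_smul, Matrix.trace_smul, Matrix.trace_sub,
    trace_mul_single, smul_eq_mul]

lemma trace_Ebt_mul (M : Matrix (Fin N) (Fin N) ℝ) (i j : Fin N) :
    ((Eb N i j)ᵀ * M).trace = (Real.sqrt 2 / 2) * (M i j - M j i) := by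
  simp [Eb, Matrix.transpose_smul, Matrix.transpose_sub, transpose_single,
    Matrix.sub_mul, Matrix.smul_mul, Matrix.trace_smul, Matrix.trace_sub,
    trace_single_mul, smul_eq_mul]

lemma trace_Eb_conj (M : Matrix (Fin N) (Fin N) ℝ) (i j : Fin N) (h : i ≠ j) :
    ((Eb N i j)ᵀ * M * Eb N i j).trace = (M i i + M j j) / 2 := by
  have hs := sqhalf
  simp only [Eb, Matrix.transpose_smul, Matrix.transpose_sub, transpose_single,
    Matrix.smul_mul, Matrix.mul_smul, Matrix.sub_mul, Matrix.mul_sub,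
    Matrix.trace_smul, Matrix.trace_sub, smul_eq_mul,
    trace_single_mul_mul_single]
  rw [if_neg h, if_neg (Ne.symm h)]
  simp only [if_true, sub_zero, zero_sub, mul_neg, sub_neg_eq_add, ← mul_add, ← mul_assoc, hs]
  ring

lemma trace_skew (C D : Matrix (Fin N) (Fin N) ℝ) :
    ((skewPart C)ᵀ * skewPart D).trace =
      ∑ i, ∑ j, (2⁻¹ * (C i j - C j i)) * (2⁻¹ * (D i j - D j i)) := by
  rw [Matrix.trace]
  simp only [Matrix.diag_apply, Matrix.mul_apply, Matrix.transpose_apply]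
  rw [Finset.sum_comm]
  exact Finset.sum_congr rfl fun i _ => Finset.sum_congr rfl fun j _ => by
    simp [skewPart, Matrix.sub_apply, Matrix.smul_apply, Matrix.transpose_apply, smul_eq_mul]

/-!
STATEMENT 14 (Closed form of the Stein kernel on `SO(N)`).  With kernel
`k(X,Y) = exp(τ tr(XᵀY))` and the orthonormal left-invariant basis `{X E_{ij}}_{i<j}`,
for any locally Lipschitz density `p` on `SO(N)` (with Riemannian gradient
`∇ log p`), the Stein kernel satisfies
`k_p(X,Y) = tr[𝒜(Xᵀ(∇_X log p + τY))ᵀ 𝒜(Yᵀ(∇_Y log p + τX))] e^{τ tr(XᵀY)}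
           + (τ/2)(N−1) tr(XᵀY) e^{τ tr(XᵀY)}`. -/
theorem kp_closed_form_SON
    {N : ℕ} (τ : ℝ) (hτ : 0 < τ)
    (p : Matrix (Fin N) (Fin N) ℝ → ℝ)
    -- `p` is a locally Lipschitz probability density on `SO(N)`
    (hpos : ∀ X ∈ Matrix.specialOrthogonalGroup (Fin N) ℝ, 0 < p X)
    (hplip : LocallyLipschitz fun v : Fin N → Fin N → ℝ => p (Matrix.of v))
    -- `gradLog X` is the Riemannian gradient `∇_X log p`: it is tangent at `X` and
    -- represents all the directional derivatives `D^{ij} log p`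
    (gradLog : Matrix (Fin N) (Fin N) ℝ → Matrix (Fin N) (Fin N) ℝ)
    (htan : ∀ X ∈ Matrix.specialOrthogonalGroup (Fin N) ℝ,
      (Xᵀ * gradLog X)ᵀ = -(Xᵀ * gradLog X))
    (hgrad : ∀ X ∈ Matrix.specialOrthogonalGroup (Fin N) ℝ, ∀ i j : Fin N,
      dirDeriv (fun Z => Real.log (p Z)) (Eb N i j) X =
        ((gradLog X)ᵀ * (X * Eb N i j)).trace) :
    ∀ X ∈ Matrix.specialOrthogonalGroup (Fin N) ℝ,
    ∀ Y ∈ Matrix.specialOrthogonalGroup (Fin N) ℝ,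
      kpSON τ p X Y =
        ((skewPart (Xᵀ * (gradLog X + τ • Y)))ᵀ *
            skewPart (Yᵀ * (gradLog Y + τ • X))).trace *
          Real.exp (τ * (Xᵀ * Y).trace) +
        (τ / 2) * ((N : ℝ) - 1) * (Xᵀ * Y).trace * Real.exp (τ * (Xᵀ * Y).trace) := by
  intro X hX Y hY
  set M := Xᵀ * Y with hM
  set e := Real.exp (τ * M.trace) with he
  set C := Xᵀ * (gradLog X + τ • Y) with hC
  set D := Yᵀ * (gradLog Y + τ • X) with hD
  have hCentry : ∀ a b : Fin N, C a b = ((gradLog X)ᵀ * X) b a + τ * M a b := by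
    intro a b
    simp only [hC, hM, Matrix.mul_add, Matrix.add_apply, Matrix.mul_smul, Matrix.smul_apply,
      smul_eq_mul]
    congr 1
    simp [Matrix.mul_apply, Matrix.transpose_apply, mul_comm]
  have hDentry : ∀ a b : Fin N, D a b = ((gradLog Y)ᵀ * Y) b a + τ * M b a := by
    intro a b
    simp only [hD, hM, Matrix.mul_add, Matrix.add_apply, Matrix.mul_smul, Matrix.smul_apply,
      smul_eq_mul]
    congr 1
    · simp [Matrix.mul_apply, Matrix.transpose_apply, mul_comm]
    · simp [Matrix.mul_apply, Matrix.transpose_apply, mul_comm]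
  have hsummand : ∀ i j : Fin N, i < j →
      steinSON p i j (fun Y' => steinSON p i j (fun X' => kSON τ X' Y') X) Y =
      e * (τ * ((M i i + M j j) / 2)) +
        e * (2⁻¹ * ((C i j - C j i) * (D i j - D j i))) := by
    intro i j hij
    rw [outer_stein, hgrad X hX i j, hgrad Y hY i j]
    have h1 : ((X * Eb N i j)ᵀ * (Y * Eb N i j)).trace = (M i i + M j j) / 2 := by
      rw [Matrix.transpose_mul, Matrix.mul_assoc, ← Matrix.mul_assoc Xᵀ Y, ← Matrix.mul_assoc]
      exact trace_Eb_conj M i j (ne_of_lt hij)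
    have h2 : ((X * Eb N i j)ᵀ * Y).trace = Real.sqrt 2 / 2 * (M i j - M j i) := by
      rw [Matrix.transpose_mul, Matrix.mul_assoc]
      exact trace_Ebt_mul M i j
    have h3 : (Xᵀ * (Y * Eb N i j)).trace = Real.sqrt 2 / 2 * (M j i - M i j) := by
      rw [← Matrix.mul_assoc]
      exact trace_mul_Eb M i j
    have h4 : ((gradLog X)ᵀ * (X * Eb N i j)).trace =
        Real.sqrt 2 / 2 * (((gradLog X)ᵀ * X) j i - ((gradLog X)ᵀ * X) i j) := by
      rw [← Matrix.mul_assoc]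
      exact trace_mul_Eb _ i j
    have h5 : ((gradLog Y)ᵀ * (Y * Eb N i j)).trace =
        Real.sqrt 2 / 2 * (((gradLog Y)ᵀ * Y) j i - ((gradLog Y)ᵀ * Y) i j) := by
      rw [← Matrix.mul_assoc]
      exact trace_mul_Eb _ i j
    rw [h1, h2, h3, h4, h5]
    have f1 : τ * (Real.sqrt 2 / 2 * (M i j - M j i)) +
        Real.sqrt 2 / 2 * (((gradLog X)ᵀ * X) j i - ((gradLog X)ᵀ * X) i j) =
        Real.sqrt 2 / 2 * (C i j - C j i) := by
      rw [hCentry i j, hCentry j i]; ring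
    have f2 : τ * (Real.sqrt 2 / 2 * (M j i - M i j)) +
        Real.sqrt 2 / 2 * (((gradLog Y)ᵀ * Y) j i - ((gradLog Y)ᵀ * Y) i j) =
        Real.sqrt 2 / 2 * (D i j - D j i) := by
      rw [hDentry i j, hDentry j i]; ring
    rw [f1, f2]
    rw [show Real.sqrt 2 / 2 * (C i j - C j i) * (Real.sqrt 2 / 2 * (D i j - D j i)) =
      (Real.sqrt 2 / 2 * (Real.sqrt 2 / 2)) * ((C i j - C j i) * (D i j - D j i)) by ring,
      sqhalf]
    ring
  have hmain : kpSON τ p X Y = ∑ i : Fin N, ∑ j : Fin N, if i < j then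
      (e * (τ * ((M i i + M j j) / 2)) +
        e * (2⁻¹ * ((C i j - C j i) * (D i j - D j i)))) else 0 := by
    rw [kpSON]
    exact Finset.sum_congr rfl fun i _ => Finset.sum_congr rfl fun j _ => by
      split_ifs with h
      · exact hsummand i j h
      · rfl
  have step := sum_lt_eq_half
    (fun i j => e * (τ * ((M i i + M j j) / 2)) +
      e * (2⁻¹ * ((C i j - C j i) * (D i j - D j i)))) (fun i j => by ring)
  rw [hmain, step]
  have htr : M.trace = ∑ i, M i i := by
    simp [Matrix.trace, Matrix.diag]
  have hdiag : ∑ i, (e * (τ * ((M i i + M i i) / 2)) +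
      e * (2⁻¹ * ((C i i - C i i) * (D i i - D i i)))) = e * τ * M.trace := by
    rw [htr, Finset.mul_sum]
    exact Finset.sum_congr rfl fun i _ => by ring
  have hall : ∑ i, ∑ j, (e * (τ * ((M i i + M j j) / 2)) +
      e * (2⁻¹ * ((C i j - C j i) * (D i j - D j i)))) =
      e * τ * ((N : ℝ) * M.trace) +
        e * 2⁻¹ * ∑ i, ∑ j, (C i j - C j i) * (D i j - D j i) := by
    rw [Finset.sum_congr rfl fun i (_ : i ∈ Finset.univ) => Finset.sum_add_distrib,
      Finset.sum_add_distrib]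
    congr 1
    · have e1 : ∑ i, ∑ j, e * (τ * ((M i i + M j j) / 2)) =
          e * τ / 2 * ∑ i : Fin N, ∑ j : Fin N, (M i i + M j j) := by
        rw [Finset.mul_sum]
        refine Finset.sum_congr rfl fun i _ => ?_
        rw [Finset.mul_sum]
        exact Finset.sum_congr rfl fun j _ => by ring
      have e2 : ∑ i : Fin N, ∑ j : Fin N, (M i i + M j j) = 2 * (N : ℝ) * M.trace := by
        rw [htr]
        rw [Finset.sum_congr rfl fun i (_ : i ∈ Finset.univ) => Finset.sum_add_distrib]
        rw [Finset.sum_add_distrib]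
        simp only [Finset.sum_const, Finset.card_univ, Fintype.card_fin, nsmul_eq_mul]
        rw [← Finset.mul_sum]
        push_cast
        ring
      rw [e1, e2]
      ring
    · rw [Finset.mul_sum]
      exact Finset.sum_congr rfl fun i _ => by
        rw [Finset.mul_sum]
        exact Finset.sum_congr rfl fun j _ => by ring
  have hskew : ((skewPart C)ᵀ * skewPart D).trace =
      4⁻¹ * ∑ i, ∑ j, (C i j - C j i) * (D i j - D j i) := by
    rw [trace_skew, Finset.mul_sum]
    exact Finset.sum_congr rfl fun i _ => by
      rw [Finset.mul_sum]
      exact Finset.sum_congr rfl fun j _ => by ring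
  rw [hall, hdiag, hskew]
  ring
end
end

section
/- Closed form of the MKSDE for the von Mises-Fisher family on SO(N): given samples X_1,…,X_n ∈ SO(N) and weights q, w, the weighted empirical KSD objective F ↦ wKSD²_n(F) built from k_p^{vMF} is, up to an additive term independent of F, the quadratic form vec(F)ᵀ A vec(F) − 2 bᵀ vec(F), where b = vec(B) with B = (τ/(2n²)) Σ_{i,j} (X_i − X_j) 𝒜(X_iᵀX_j) e^{τ tr(X_iᵀX_j)} (q(X_i)/w(X_i))(q(X_j)/w(X_j)) and A = (1/(2n²)) Σ_{i,j} [I ⊗ X_i X_jᵀ − (X_iᵀ ⊗ X_j) S_{N,N}] e^{τ tr(X_iᵀX_j)} (q(X_i)/w(X_i))(q(X_j)/w(X_j)); hence (when A is invertible) the minimizer is F̂ = vec⁻¹(A⁻¹ b). -/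
open Matrix
open scoped Kronecker

noncomputable section

/-- Column-stacking vectorization: `vecM F (c, r) = F r c`. -/
def vecM {N : ℕ} (F : Matrix (Fin N) (Fin N) ℝ) : Fin N × Fin N → ℝ :=
  fun cr => F cr.2 cr.1

/-- Inverse of column-stacking vectorization. -/
def unvecM {N : ℕ} (v : Fin N × Fin N → ℝ) : Matrix (Fin N) (Fin N) ℝ :=
  Matrix.of fun r c => v (c, r)

/-- The perfect shuffle matrix `S_{N,N}`, characterized by `S_{N,N} vec F = vec Fᵀ`. -/
def shuffle (N : ℕ) : Matrix (Fin N × Fin N) (Fin N × Fin N) ℝ :=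
  Matrix.of fun a b => if a.1 = b.2 ∧ a.2 = b.1 then (1 : ℝ) else 0

/-- The von Mises–Fisher Stein kernel on `SO(N)` (closed form, parameter `F`). -/
def kvMF {N : ℕ} (τ : ℝ) (F X Y : Matrix (Fin N) (Fin N) ℝ) : ℝ :=
  cSON τ X Y +
    ((skewPart (Xᵀ * (F + τ • Y)))ᵀ * skewPart (Yᵀ * (F + τ • X))).trace *
      Real.exp (τ * (Xᵀ * Y).trace)

/-! ### Auxiliary lemmas for the proof -/

section MKSDEAux

variable {N : ℕ}

private lemma MK_tr_tt (A B : Matrix (Fin N) (Fin N) ℝ) :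
    (Aᵀ * Bᵀ).trace = (A * B).trace := by
  rw [← Matrix.transpose_mul, Matrix.trace_transpose, Matrix.trace_mul_comm]

private lemma MK_tr_skew_skew (M K : Matrix (Fin N) (Fin N) ℝ) :
    ((skewPart M)ᵀ * skewPart K).trace = 2⁻¹ * ((Mᵀ * K).trace - (M * K).trace) := by
  have h1 : (Mᵀ * Kᵀ).trace = (M * K).trace := MK_tr_tt M K
  have h2 : (M * Kᵀ).trace = (Mᵀ * K).trace := by
    rw [← Matrix.trace_transpose (M * Kᵀ), Matrix.transpose_mul, Matrix.transpose_transpose,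
      Matrix.trace_mul_comm]
  simp only [skewPart, Matrix.transpose_smul, Matrix.transpose_sub, Matrix.transpose_transpose,
    Matrix.smul_mul, Matrix.mul_smul, Matrix.sub_mul, Matrix.mul_sub, Matrix.trace_smul,
    Matrix.trace_sub, smul_eq_mul, h1, h2]
  ring

private lemma MK_e1 (U V F : Matrix (Fin N) (Fin N) ℝ) :
    (Uᵀ * (F * (Vᵀ * F))).trace = (Fᵀ * (V * (Fᵀ * U))).trace := by
  rw [← Matrix.trace_transpose (Uᵀ * (F * (Vᵀ * F)))]
  simp only [Matrix.transpose_mul, Matrix.transpose_transpose, Matrix.mul_assoc]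

private lemma MK_term_id (τ : ℝ) (U V F : Matrix (Fin N) (Fin N) ℝ) :
    ((skewPart (Uᵀ * (F + τ • V)))ᵀ * skewPart (Vᵀ * (F + τ • U))).trace
    = 2⁻¹ * ((Fᵀ * (U * Vᵀ) * F).trace - (Fᵀ * (V * (Fᵀ * U))).trace)
      - τ * (((U - V) * skewPart (Uᵀ * V))ᵀ * F).trace
      + τ ^ 2 * ((skewPart (Uᵀ * V))ᵀ * skewPart (Vᵀ * U)).trace := by
  rw [MK_tr_skew_skew, MK_tr_skew_skew]
  have e1 := MK_e1 U V F
  have e2 : (Fᵀ * (U * (Vᵀ * U))).trace = (Uᵀ * (V * (Uᵀ * F))).trace := by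
    rw [← Matrix.trace_transpose (Fᵀ * (U * (Vᵀ * U)))]
    simp only [Matrix.transpose_mul, Matrix.transpose_transpose, Matrix.mul_assoc]
  have e3 : (Uᵀ * (F * (Vᵀ * U))).trace = (Vᵀ * (U * (Uᵀ * F))).trace := by
    rw [show Uᵀ * (F * (Vᵀ * U)) = (Uᵀ * F) * (Vᵀ * U) by rw [Matrix.mul_assoc],
      Matrix.trace_mul_comm, Matrix.mul_assoc]
  simp only [skewPart, Matrix.transpose_smul, Matrix.transpose_sub, Matrix.transpose_add,
    Matrix.transpose_mul, Matrix.transpose_transpose, Matrix.smul_mul, Matrix.mul_smul,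
    Matrix.sub_mul, Matrix.mul_sub, Matrix.mul_add, Matrix.add_mul, Matrix.trace_smul,
    Matrix.trace_sub, Matrix.trace_add, smul_eq_mul, Matrix.mul_assoc]
  linear_combination (-(2:ℝ)⁻¹) * e1 + (τ * 2⁻¹) * e2 - (τ * 2⁻¹) * e3

private lemma MK_H_skew (U V G : Matrix (Fin N) (Fin N) ℝ) :
    (Gᵀ * (U * Vᵀ) * G).trace - (Gᵀ * (V * (Gᵀ * U))).trace
    = 2 * ((skewPart (Uᵀ * G))ᵀ * skewPart (Vᵀ * G)).trace := by
  rw [MK_tr_skew_skew]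
  have a1 : ((Uᵀ * G)ᵀ * (Vᵀ * G)).trace = (Gᵀ * (U * Vᵀ) * G).trace := by
    simp only [Matrix.transpose_mul, Matrix.transpose_transpose, Matrix.mul_assoc]
  have a2 : ((Uᵀ * G) * (Vᵀ * G)).trace = (Gᵀ * (V * (Gᵀ * U))).trace := by
    rw [Matrix.mul_assoc]; exact MK_e1 U V G
  rw [a1, a2]; ring

private lemma MK_vec_dot_vec (F G : Matrix (Fin N) (Fin N) ℝ) :
    vecM F ⬝ᵥ vecM G = (Fᵀ * G).trace := by
  simp only [dotProduct, vecM, Matrix.trace, Matrix.diag, Matrix.mul_apply,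
    Matrix.transpose_apply]
  rw [Fintype.sum_prod_type]

private lemma MK_vecM_unvecM (v : Fin N × Fin N → ℝ) : vecM (unvecM v) = v := by
  funext ⟨c, r⟩; rfl

private lemma MK_vecM_add (F G : Matrix (Fin N) (Fin N) ℝ) :
    vecM (F + G) = vecM F + vecM G := rfl

private lemma MK_kron_mulVec (P Q F : Matrix (Fin N) (Fin N) ℝ) :
    (P ⊗ₖ Q) *ᵥ vecM F = vecM (Q * F * Pᵀ) := by
  funext ⟨c, r⟩
  simp only [Matrix.mulVec, dotProduct, vecM, Matrix.kroneckerMap_apply, Matrix.mul_apply,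
    Matrix.transpose_apply, Fintype.sum_prod_type, Finset.sum_mul, Finset.mul_sum]
  exact Finset.sum_congr rfl fun c' _ => Finset.sum_congr rfl fun r' _ => by ring

private lemma MK_shuffle_mulVec (F : Matrix (Fin N) (Fin N) ℝ) :
    shuffle N *ᵥ vecM F = vecM Fᵀ := by
  funext ⟨c, r⟩
  simp [shuffle, Matrix.mulVec, dotProduct, vecM, Fintype.sum_prod_type, ite_and,
    Finset.sum_ite_eq, Finset.sum_ite_eq']

private lemma MK_trace_entry (P Q : Matrix (Fin N) (Fin N) ℝ) :
    (Pᵀ * Q).trace = ∑ p : Fin N × Fin N, P p.1 p.2 * Q p.1 p.2 := by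
  simp only [Matrix.trace, Matrix.diag, Matrix.mul_apply, Matrix.transpose_apply,
    Fintype.sum_prod_type]
  exact Finset.sum_comm

private lemma MK_tr_sym (U V : Matrix (Fin N) (Fin N) ℝ) :
    (Uᵀ * V).trace = (Vᵀ * U).trace := by
  rw [← Matrix.trace_transpose (Uᵀ * V), Matrix.transpose_mul, Matrix.transpose_transpose]

private lemma MK_sum_mulVec {m k : Type*} [Fintype k] {ι : Type*} (s : Finset ι)
    (M : ι → Matrix m k ℝ) (v : k → ℝ) :
    (∑ i ∈ s, M i) *ᵥ v = ∑ i ∈ s, M i *ᵥ v := by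
  induction s using Finset.cons_induction with
  | empty => simp [Matrix.zero_mulVec]
  | cons a s ha ih => simp only [Finset.sum_cons, Matrix.add_mulVec, ih]

private lemma MK_dot_sum {m : Type*} [Fintype m] {ι : Type*} (s : Finset ι)
    (v : m → ℝ) (f : ι → m → ℝ) :
    v ⬝ᵥ (∑ i ∈ s, f i) = ∑ i ∈ s, v ⬝ᵥ f i := by
  induction s using Finset.cons_induction with
  | empty => simp
  | cons a s ha ih => simp only [Finset.sum_cons, dotProduct_add, ih]

private lemma MK_quad_eval {n : ℕ} (d : ℝ) (a : Fin n → Fin n → ℝ)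
    (X : Fin n → Matrix (Fin N) (Fin N) ℝ) (F G : Matrix (Fin N) (Fin N) ℝ) :
    vecM F ⬝ᵥ ((d • ∑ i : Fin n, ∑ j : Fin n,
        a i j • ((1 : Matrix (Fin N) (Fin N) ℝ) ⊗ₖ (X i * (X j)ᵀ) -
          ((X i)ᵀ ⊗ₖ X j) * shuffle N)) *ᵥ vecM G)
    = ∑ i : Fin n, ∑ j : Fin n,
        d * (a i j * ((Fᵀ * (X i * (X j)ᵀ) * G).trace - (Fᵀ * (X j * (Gᵀ * X i))).trace)) := by
  rw [Matrix.smul_mulVec, dotProduct_smul, smul_eq_mul, MK_sum_mulVec, MK_dot_sum,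
    Finset.mul_sum]
  refine Finset.sum_congr rfl fun i _ => ?_
  rw [MK_sum_mulVec, MK_dot_sum, Finset.mul_sum]
  refine Finset.sum_congr rfl fun j _ => ?_
  rw [Matrix.smul_mulVec, dotProduct_smul, smul_eq_mul, Matrix.sub_mulVec, dotProduct_sub,
    ← Matrix.mulVec_mulVec, MK_shuffle_mulVec, MK_kron_mulVec, MK_kron_mulVec,
    MK_vec_dot_vec, MK_vec_dot_vec, Matrix.transpose_one, Matrix.mul_one,
    Matrix.transpose_transpose]
  simp only [Matrix.mul_assoc]

private lemma MK_B_dot {n : ℕ} (d : ℝ) (a : Fin n → Fin n → ℝ)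
    (X : Fin n → Matrix (Fin N) (Fin N) ℝ) (F : Matrix (Fin N) (Fin N) ℝ) :
    vecM (d • ∑ i : Fin n, ∑ j : Fin n,
        a i j • ((X i - X j) * skewPart ((X i)ᵀ * X j))) ⬝ᵥ vecM F
    = ∑ i : Fin n, ∑ j : Fin n,
        d * (a i j * ((((X i - X j) * skewPart ((X i)ᵀ * X j))ᵀ * F).trace)) := by
  rw [MK_vec_dot_vec]
  simp only [Matrix.transpose_smul, Matrix.transpose_sum, Matrix.smul_mul, Finset.sum_mul,
    Matrix.trace_smul, Matrix.trace_sum, smul_eq_mul, Finset.mul_sum]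


private lemma MK_gram_sq {n : ℕ} {κ : Type*} [Fintype κ] (g : Fin n → κ → ℝ) :
    0 ≤ ∑ i : Fin n, ∑ j : Fin n, ∑ k : κ, g i k * g j k := by
  have h : ∑ i : Fin n, ∑ j : Fin n, ∑ k : κ, g i k * g j k
      = ∑ k : κ, (∑ i : Fin n, g i k) ^ 2 := by
    have h2 : ∀ k : κ, (∑ i : Fin n, g i k) ^ 2 = ∑ i : Fin n, ∑ j : Fin n, g i k * g j k := by
      intro k; rw [sq, Finset.sum_mul_sum]
    simp only [h2]
    calc ∑ i : Fin n, ∑ j : Fin n, ∑ k : κ, g i k * g j k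
        = ∑ i : Fin n, ∑ k : κ, ∑ j : Fin n, g i k * g j k :=
          Finset.sum_congr rfl fun i _ =>
            Finset.sum_comm (f := fun j k => g i k * g j k)
      _ = ∑ k : κ, ∑ i : Fin n, ∑ j : Fin n, g i k * g j k :=
          Finset.sum_comm (f := fun i k => ∑ j : Fin n, g i k * g j k)
  rw [h]
  exact Finset.sum_nonneg fun k _ => sq_nonneg _

private lemma MK_pow_gram (m : ℕ) {K : Type*} [Fintype K] [DecidableEq K] (x y : K → ℝ) :
    (∑ k : K, x k * y k) ^ m
      = ∑ f : Fin m → K, (∏ l : Fin m, x (f l)) * (∏ l : Fin m, y (f l)) := by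
  have h1 : (∑ k : K, x k * y k) ^ m = ∏ _l : Fin m, (∑ k : K, x k * y k) := by
    simp [Finset.prod_const]
  rw [h1, Finset.prod_univ_sum]
  simp [Fintype.piFinset_univ, Finset.prod_mul_distrib]

private lemma MK_gram_pow_nonneg (m : ℕ) {n : ℕ} {K P : Type*} [Fintype K] [Fintype P]
    [DecidableEq K] (x : Fin n → K → ℝ) (u : Fin n → P → ℝ) (c : Fin n → ℝ) :
    0 ≤ ∑ i : Fin n, ∑ j : Fin n,
      (∑ k : K, x i k * x j k) ^ m * (c i * c j * (∑ p : P, u i p * u j p)) := by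
  have key : ∀ i j : Fin n,
      (∑ k : K, x i k * x j k) ^ m * (c i * c j * (∑ p : P, u i p * u j p))
      = ∑ q : P × (Fin m → K),
          (c i * u i q.1 * ∏ l : Fin m, x i (q.2 l)) *
          (c j * u j q.1 * ∏ l : Fin m, x j (q.2 l)) := by
    intro i j
    rw [MK_pow_gram, Fintype.sum_prod_type]
    rw [Finset.sum_mul, Finset.sum_comm]
    refine Finset.sum_congr rfl fun p _ => ?_
    rw [show c i * c j * ∑ q : P, u i q * u j q = ∑ q : P, c i * c j * (u i q * u j q) by
      rw [Finset.mul_sum], Finset.mul_sum]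
    exact Finset.sum_congr rfl fun s _ => by ring
  simp only [key]
  exact MK_gram_sq _

private lemma MK_psd_core {n : ℕ} {K P : Type*} [Fintype K] [Fintype P] [DecidableEq K]
    (τ : ℝ) (hτ : 0 ≤ τ) (x : Fin n → K → ℝ) (u : Fin n → P → ℝ) (c : Fin n → ℝ) :
    0 ≤ ∑ i : Fin n, ∑ j : Fin n,
      Real.exp (τ * ∑ k : K, x i k * x j k) * c i * c j * (∑ p : P, u i p * u j p) := by
  have hexp : ∀ y C : ℝ, Real.exp y * C = ∑' m : ℕ, y ^ m / m.factorial * C := by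
    intro y C
    rw [Real.exp_eq_exp_ℝ, NormedSpace.exp_eq_tsum_div, tsum_mul_right]
  have step : ∀ i j : Fin n,
      Real.exp (τ * ∑ k : K, x i k * x j k) * c i * c j * (∑ p : P, u i p * u j p)
      = ∑' m : ℕ, (τ * ∑ k : K, x i k * x j k) ^ m / m.factorial *
          (c i * c j * (∑ p : P, u i p * u j p)) := by
    intro i j
    rw [show Real.exp (τ * ∑ k : K, x i k * x j k) * c i * c j * (∑ p : P, u i p * u j p)
        = Real.exp (τ * ∑ k : K, x i k * x j k) * (c i * c j * (∑ p : P, u i p * u j p)) by ring]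
    exact hexp _ _
  simp only [step]
  rw [show (∑ i : Fin n, ∑ j : Fin n, ∑' m : ℕ,
        (τ * ∑ k : K, x i k * x j k) ^ m / m.factorial *
          (c i * c j * (∑ p : P, u i p * u j p)))
      = ∑ q : Fin n × Fin n, ∑' m : ℕ,
        (τ * ∑ k : K, x q.1 k * x q.2 k) ^ m / m.factorial *
          (c q.1 * c q.2 * (∑ p : P, u q.1 p * u q.2 p)) from
    by rw [Fintype.sum_prod_type]]
  rw [← Summable.tsum_finsetSum (fun q _ => ((Real.summable_pow_div_factorial _).mul_right _))]
  refine tsum_nonneg fun m => ?_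
  rw [Fintype.sum_prod_type]
  have expand : ∀ i j : Fin n,
      (τ * ∑ k : K, x i k * x j k) ^ m / (m.factorial : ℝ) *
          (c i * c j * (∑ p : P, u i p * u j p))
      = τ ^ m / m.factorial *
          ((∑ k : K, x i k * x j k) ^ m * (c i * c j * (∑ p : P, u i p * u j p))) := by
    intro i j; rw [mul_pow]; ring
  simp only [expand]
  simp only [← Finset.mul_sum]
  exact mul_nonneg (by positivity) (MK_gram_pow_nonneg m x u c)

private lemma MK_sum_comb {n : ℕ} (c1 c2 : ℝ) (f g h k : Fin n → Fin n → ℝ)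
    (H : ∀ i j, c1 * f i j = g i j - 2 * h i j + c2 * k i j) :
    c1 * (∑ i : Fin n, ∑ j : Fin n, f i j)
      = (∑ i : Fin n, ∑ j : Fin n, g i j) - 2 * (∑ i : Fin n, ∑ j : Fin n, h i j)
        + c2 * (∑ i : Fin n, ∑ j : Fin n, k i j) := by
  simp only [Finset.mul_sum, ← Finset.sum_sub_distrib, ← Finset.sum_add_distrib]
  exact Finset.sum_congr rfl fun i _ => Finset.sum_congr rfl fun j _ => H i j


end MKSDEAux

/-!
STATEMENT 17 (Closed form of the MKSDE for the von Mises–Fisher family on `SO(N)`).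
Given samples `X_1,…,X_n ∈ SO(N)` and weights `q`, `w`, the weighted empirical KSD
objective `F ↦ wKSD²_n(F)` is, up to an additive constant independent of `F`, the
quadratic form `vec(F)ᵀ A vec(F) − 2 bᵀ vec(F)` with `A`, `b = vec B` as below; hence,
when `A` is invertible, the minimizer is `F̂ = vec⁻¹(A⁻¹ b)`. -/
set_option maxHeartbeats 1000000 in
theorem mksde_vMF_closed_form
    {N : ℕ} (τ : ℝ) (hτ : 0 < τ) (n : ℕ) (hn : 0 < n)
    -- the samples
    (X : Fin n → Matrix (Fin N) (Fin N) ℝ)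
    (hX : ∀ i, X i ∈ Matrix.specialOrthogonalGroup (Fin N) ℝ)
    -- the target density `q` and the sampling density `w` (only the ratios `q/w` at the
    -- samples enter)
    (q w : Matrix (Fin N) (Fin N) ℝ → ℝ) (hw : ∀ i, w (X i) ≠ 0)
    -- the matrices `B` (giving `b = vec B`) and `A` of the statement
    (B : Matrix (Fin N) (Fin N) ℝ)
    (hB : B = (τ / (2 * (n : ℝ) ^ 2)) •
      ∑ i : Fin n, ∑ j : Fin n,
        (Real.exp (τ * ((X i)ᵀ * X j).trace) *
          (q (X i) / w (X i)) * (q (X j) / w (X j))) •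
          ((X i - X j) * skewPart ((X i)ᵀ * X j)))
    (A : Matrix (Fin N × Fin N) (Fin N × Fin N) ℝ)
    (hA : A = (1 / (2 * (n : ℝ) ^ 2)) •
      ∑ i : Fin n, ∑ j : Fin n,
        (Real.exp (τ * ((X i)ᵀ * X j).trace) *
          (q (X i) / w (X i)) * (q (X j) / w (X j))) •
          ((1 : Matrix (Fin N) (Fin N) ℝ) ⊗ₖ (X i * (X j)ᵀ) -
            ((X i)ᵀ ⊗ₖ X j) * shuffle N)) :
    -- the objective is the stated quadratic form up to an `F`-independent constant …
    (∃ c0 : ℝ, ∀ F : Matrix (Fin N) (Fin N) ℝ,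
      ((n : ℝ) ^ 2)⁻¹ * ∑ i : Fin n, ∑ j : Fin n,
          kvMF τ F (X i) (X j) * q (X i) * q (X j) * (w (X i))⁻¹ * (w (X j))⁻¹ =
        vecM F ⬝ᵥ (A *ᵥ vecM F) - 2 * (vecM B ⬝ᵥ vecM F) + c0) ∧
    -- … hence for invertible `A` the MKSDE is `F̂ = vec⁻¹(A⁻¹ b)`
    (∀ _ : Invertible A, ∀ F : Matrix (Fin N) (Fin N) ℝ,
      ((n : ℝ) ^ 2)⁻¹ * ∑ i : Fin n, ∑ j : Fin n,
          kvMF τ (unvecM (A⁻¹ *ᵥ vecM B)) (X i) (X j) *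
            q (X i) * q (X j) * (w (X i))⁻¹ * (w (X j))⁻¹ ≤
      ((n : ℝ) ^ 2)⁻¹ * ∑ i : Fin n, ∑ j : Fin n,
          kvMF τ F (X i) (X j) * q (X i) * q (X j) * (w (X i))⁻¹ * (w (X j))⁻¹) := by
  have hquad : ∀ F G : Matrix (Fin N) (Fin N) ℝ,
      vecM F ⬝ᵥ (A *ᵥ vecM G)
      = ∑ i : Fin n, ∑ j : Fin n, (1 / (2 * (n : ℝ) ^ 2)) *
          ((Real.exp (τ * ((X i)ᵀ * X j).trace) *
            (q (X i) / w (X i)) * (q (X j) / w (X j))) *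
            ((Fᵀ * (X i * (X j)ᵀ) * G).trace - (Fᵀ * (X j * (Gᵀ * X i))).trace)) := by
    intro F G
    rw [hA]
    have h := MK_quad_eval (1 / (2 * (n : ℝ) ^ 2))
      (fun i j => Real.exp (τ * ((X i)ᵀ * X j).trace) *
        (q (X i) / w (X i)) * (q (X j) / w (X j))) X F G
    simp only [] at h
    exact h
  have hBdot : ∀ F : Matrix (Fin N) (Fin N) ℝ,
      vecM B ⬝ᵥ vecM F
      = ∑ i : Fin n, ∑ j : Fin n, (τ / (2 * (n : ℝ) ^ 2)) *
          ((Real.exp (τ * ((X i)ᵀ * X j).trace) *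
            (q (X i) / w (X i)) * (q (X j) / w (X j))) *
            ((((X i - X j) * skewPart ((X i)ᵀ * X j))ᵀ * F).trace)) := by
    intro F
    rw [hB]
    have h := MK_B_dot (τ / (2 * (n : ℝ) ^ 2))
      (fun i j => Real.exp (τ * ((X i)ᵀ * X j).trace) *
        (q (X i) / w (X i)) * (q (X j) / w (X j))) X F
    exact h
  have key : ∀ F : Matrix (Fin N) (Fin N) ℝ,
      ((n : ℝ) ^ 2)⁻¹ * ∑ i : Fin n, ∑ j : Fin n,
          kvMF τ F (X i) (X j) * q (X i) * q (X j) * (w (X i))⁻¹ * (w (X j))⁻¹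
      = vecM F ⬝ᵥ (A *ᵥ vecM F) - 2 * (vecM B ⬝ᵥ vecM F)
        + ((n : ℝ) ^ 2)⁻¹ * ∑ i : Fin n, ∑ j : Fin n,
            (cSON τ (X i) (X j) * q (X i) * q (X j) * (w (X i))⁻¹ * (w (X j))⁻¹
              + (Real.exp (τ * ((X i)ᵀ * X j).trace) *
                  (q (X i) / w (X i)) * (q (X j) / w (X j))) * τ ^ 2 *
                ((skewPart ((X i)ᵀ * X j))ᵀ * skewPart ((X j)ᵀ * X i)).trace) := by
    intro F
    rw [hquad F F, hBdot F]
    refine MK_sum_comb _ _ _ _ _ _ fun i j => ?_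
    simp only [kvMF]
    rw [MK_term_id τ (X i) (X j) F]
    simp only [div_eq_mul_inv]
    ring
  refine ⟨⟨_, key⟩, ?_⟩
  intro hInv F
  have hAinv : A *ᵥ (A⁻¹ *ᵥ vecM B) = vecM B := by
    rw [Matrix.mulVec_mulVec, Matrix.mul_inv_of_invertible, Matrix.one_mulVec]
  set Fh := unvecM (A⁻¹ *ᵥ vecM B) with hFh
  have hvFh : vecM Fh = A⁻¹ *ᵥ vecM B := MK_vecM_unvecM _
  set G := F - Fh with hG
  have hv : vecM F = vecM Fh + vecM G := by
    have hFG : F = Fh + G := by rw [hG]; abel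
    rw [show vecM F = vecM (Fh + G) from by rw [← hFG], MK_vecM_add]
  have hsym : ∀ P Q : Matrix (Fin N) (Fin N) ℝ,
      vecM P ⬝ᵥ (A *ᵥ vecM Q) = vecM Q ⬝ᵥ (A *ᵥ vecM P) := by
    intro P Q
    rw [hquad P Q, hquad Q P, Finset.sum_comm]
    refine Finset.sum_congr rfl fun x _ => Finset.sum_congr rfl fun y _ => ?_
    have tA : (Pᵀ * (X y * (X x)ᵀ) * Q).trace = (Qᵀ * (X x * (X y)ᵀ) * P).trace := by
      rw [← Matrix.trace_transpose (Pᵀ * (X y * (X x)ᵀ) * Q)]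
      simp only [Matrix.transpose_mul, Matrix.transpose_transpose, Matrix.mul_assoc]
    have tB : (Pᵀ * (X x * (Qᵀ * X y))).trace = (Qᵀ * (X y * (Pᵀ * X x))).trace := by
      rw [show Pᵀ * (X x * (Qᵀ * X y)) = (Pᵀ * X x) * (Qᵀ * X y) by rw [Matrix.mul_assoc],
        Matrix.trace_mul_comm, Matrix.mul_assoc]
    rw [MK_tr_sym (X y) (X x), tA, tB]
    ring
  have hApos : ∀ P : Matrix (Fin N) (Fin N) ℝ, 0 ≤ vecM P ⬝ᵥ (A *ᵥ vecM P) := by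
    intro P
    rw [hquad P P]
    have form : ∀ i j : Fin n, (1 / (2 * (n : ℝ) ^ 2)) *
        ((Real.exp (τ * ((X i)ᵀ * X j).trace) *
          (q (X i) / w (X i)) * (q (X j) / w (X j))) *
          ((Pᵀ * (X i * (X j)ᵀ) * P).trace - (Pᵀ * (X j * (Pᵀ * X i))).trace))
        = ((n : ℝ) ^ 2)⁻¹ *
            (Real.exp (τ * ∑ k : Fin N × Fin N, X i k.1 k.2 * X j k.1 k.2) *
              (q (X i) / w (X i)) * (q (X j) / w (X j)) *
              (∑ p : Fin N × Fin N,
                skewPart ((X i)ᵀ * P) p.1 p.2 * skewPart ((X j)ᵀ * P) p.1 p.2)) := by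
      intro i j
      rw [MK_H_skew (X i) (X j) P,
        ← MK_trace_entry (skewPart ((X i)ᵀ * P)) (skewPart ((X j)ᵀ * P)),
        ← MK_trace_entry (X i) (X j)]
      ring
    simp only [form]
    simp only [← Finset.mul_sum]
    refine mul_nonneg (by positivity) ?_
    have h := MK_psd_core (K := Fin N × Fin N) (P := Fin N × Fin N) τ hτ.le (fun i k => X i k.1 k.2)
      (fun i p => skewPart ((X i)ᵀ * P) p.1 p.2) (fun i => q (X i) / w (X i))
    exact h
  rw [key F, key Fh]
  have e1 : vecM F ⬝ᵥ (A *ᵥ vecM F)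
      = vecM Fh ⬝ᵥ (A *ᵥ vecM Fh) + 2 * (vecM G ⬝ᵥ vecM B) + vecM G ⬝ᵥ (A *ᵥ vecM G) := by
    rw [hv, Matrix.mulVec_add, dotProduct_add, add_dotProduct, add_dotProduct,
      hsym Fh G]
    rw [show A *ᵥ vecM Fh = vecM B from by rw [hvFh, hAinv]]
    ring
  have e2 : vecM B ⬝ᵥ vecM F = vecM B ⬝ᵥ vecM Fh + vecM G ⬝ᵥ vecM B := by
    rw [hv, dotProduct_add, dotProduct_comm (vecM B) (vecM G)]
  have := hApos G
  linarith [e1, e2]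
end
end

section
/- Convex localization lemma: let f : ℝ^n → ℝ be convex and C ⊂ ℝ^n a bounded open set. If there exists x₀ ∈ C with f(x₀) < inf_{x ∈ ∂C} f(x), then inf_{x ∉ C} f(x) = inf_{x ∈ ∂C} f(x), and the set of global minimizers of f is non-empty and contained in C. -/
/-!
STATEMENT 18 (Convex localization lemma).  Let `f : ℝⁿ → ℝ` be convex and `C ⊆ ℝⁿ` a
bounded open set.  If there exists `x₀ ∈ C` with `f(x₀) < inf_{x ∈ ∂C} f(x)`, then
`inf_{x ∉ C} f(x) = inf_{x ∈ ∂C} f(x)`, and the set of global minimizers of `f` is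
non-empty and contained in `C`. -/

theorem convex_localization
    {n : ℕ} (f : EuclideanSpace ℝ (Fin n) → ℝ)
    (hf : ConvexOn ℝ Set.univ f)
    (C : Set (EuclideanSpace ℝ (Fin n)))
    (hCopen : IsOpen C) (hCbdd : Bornology.IsBounded C)
    (x₀ : EuclideanSpace ℝ (Fin n)) (hx₀ : x₀ ∈ C)
    (hlt : f x₀ < sInf (f '' frontier C)) :
    sInf (f '' Cᶜ) = sInf (f '' frontier C) ∧
    {x | ∀ y, f x ≤ f y}.Nonempty ∧
    {x | ∀ y, f x ≤ f y} ⊆ C := by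
  set m := sInf (f '' frontier C) with hm
  have hfc : Continuous f := by
    rw [← continuousOn_univ]
    exact hf.continuousOn isOpen_univ
  -- frontier is disjoint from C
  have hfrC : ∀ z ∈ frontier C, z ∉ C := by
    intro z hz hzc
    exact hz.2 (by rwa [hCopen.interior_eq])
  -- f is bounded below (by m) on frontier C
  have hbdd : BddBelow (f '' frontier C) :=
    ((hCbdd.isCompact_closure.of_isClosed_subset isClosed_frontier
      frontier_subset_closure).image hfc).bddBelow
  -- the segment from x₀ to any point outside C meets the frontier
  have hseg : ∀ y ∉ C, ∃ z ∈ frontier C, z ∈ segment ℝ x₀ y := by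
    intro y hy
    by_cases hycl : y ∈ closure C
    · exact ⟨y, ⟨hycl, by rwa [hCopen.interior_eq]⟩, right_mem_segment ℝ x₀ y⟩
    · by_contra h
      push_neg at h
      have hpc : IsPreconnected (segment ℝ x₀ y) := (convex_segment x₀ y).isPreconnected
      have hsub : segment ℝ x₀ y ⊆ C ∪ (closure C)ᶜ := by
        intro z hz
        by_cases hzC : z ∈ C
        · exact Or.inl hzC
        by_cases hzcl : z ∈ closure C
        · exact absurd hz (h z ⟨hzcl, fun hi => hzC (hCopen.interior_eq ▸ hi)⟩)
        · exact Or.inr hzcl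
      obtain ⟨z, _, hz1, hz2⟩ := hpc C (closure C)ᶜ hCopen isClosed_closure.isOpen_compl hsub
        ⟨x₀, left_mem_segment ℝ x₀ y, hx₀⟩ ⟨y, right_mem_segment ℝ x₀ y, hycl⟩
      exact hz2 (subset_closure hz1)
  -- key: f ≥ m outside C
  have key : ∀ y ∉ C, m ≤ f y := by
    intro y hy
    obtain ⟨z, hzf, a, b, ha, hb, hab, hz⟩ := hseg y hy
    have hmz : m ≤ f z := csInf_le hbdd ⟨z, hzf, rfl⟩
    have hconv : f z ≤ a * f x₀ + b * f y := by
      have := hf.2 (Set.mem_univ x₀) (Set.mem_univ y) ha hb hab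
      rw [hz] at this
      simpa using this
    have hbpos : 0 < b := by
      rcases hb.lt_or_eq with hlt' | heq
      · exact hlt'
      · exfalso
        have ha1 : a = 1 := by linarith
        have : z = x₀ := by
          rw [← hz, ← heq, ha1]
          simp
        exact hfrC z hzf (this ▸ hx₀)
    have h1 : a * f x₀ ≤ a * m := mul_le_mul_of_nonneg_left hlt.le ha
    have h2 : m ≤ a * m + b * f y := by linarith
    have h4 : a * m + b * m = m := by rw [← add_mul, hab, one_mul]
    have h3 : b * m ≤ b * f y := by linarith
    exact le_of_mul_le_mul_left h3 hbpos
  -- existence of a global minimizer on closure C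
  obtain ⟨xs, hxscl, hxsmin⟩ := hCbdd.isCompact_closure.exists_isMinOn
    ⟨x₀, subset_closure hx₀⟩ hfc.continuousOn
  have hglobal : ∀ y, f xs ≤ f y := by
    intro y
    by_cases hy : y ∈ closure C
    · exact hxsmin hy
    · exact le_trans (le_trans (hxsmin (subset_closure hx₀)) (le_of_lt (lt_of_lt_of_le hlt
        (key y (fun hc => hy (subset_closure hc)))))) le_rfl
  refine ⟨?_, ⟨xs, hglobal⟩, ?_⟩
  · -- sInf equality
    rcases Set.eq_empty_or_nonempty Cᶜ with hce | hce
    · have : frontier C = ∅ := by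
        rw [Set.eq_empty_iff_forall_notMem]
        intro z hz
        exact (Set.eq_empty_iff_forall_notMem.mp hce z) (hfrC z hz)
      rw [hm, hce, this]
    · have hfr_ne : (frontier C).Nonempty := by
        obtain ⟨y, hy⟩ := hce
        obtain ⟨z, hz, _⟩ := hseg y hy
        exact ⟨z, hz⟩
      apply le_antisymm
      · exact csInf_le_csInf
          ⟨m, fun r ⟨y, hy, hr⟩ => hr ▸ key y hy⟩
          (hfr_ne.image f)
          (Set.image_mono (fun z hz => hfrC z hz))
      · exact le_csInf (hce.image f) (fun r ⟨y, hy, hr⟩ => hr ▸ key y hy)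
  · -- minimizers contained in C
    intro x hx
    by_contra hxC
    have h1 : m ≤ f x := key x hxC
    have h2 : f x ≤ f x₀ := hx x₀
    linarith
end
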